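/- The quadratically regularized median of equal weights is asymptotically correct: if (ξ_n) is a real sequence converging to 0 and x ∈ ℝ, then for every ε > 0 there exists N₀ such that the quadratically regularized median of the values (x + ξ_1, …, x + ξ_{N₀}) with unit weights lies within ε of x. -/

import Mathlib

open Filter

/-- Objective of the quadratically regularized median with unit weights. -/
noncomputable def qrObjUnit (L : ℝ) {N : ℕ} (y : Fin N → ℝ) (z : ℝ) : ℝ :=
  z ^ 2 / (2 * L) + ∑ n, |z - y n|

lemma qrObjUnit_neg (L : ℝ) {N : ℕ} (y : Fin N → ℝ) (z : ℝ) :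
    qrObjUnit L (fun n => -(y n)) (-z) = qrObjUnit L y z := by
  unfold qrObjUnit
  congr 1
  · ring_nf
  · refine Finset.sum_congr rfl fun n _ => ?_
    rw [show -z - -(y n) = -(z - y n) by ring, abs_neg]

lemma qrKey (L : ℝ) (hL : 0 < L) (x ε : ℝ) (hε : 0 < ε)
    (N₁ M : ℕ) (hM : (|x| + ε) / L < M)
    (ξ : ℕ → ℝ) (hξs : ∀ n ≥ N₁, |ξ n| < ε / 2)
    (q : ℝ) (hq : x + ε < q) :
    qrObjUnit L (fun n : Fin (2 * N₁ + M + 1) => x + ξ n) (x + ε) <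
      qrObjUnit L (fun n : Fin (2 * N₁ + M + 1) => x + ξ n) q := by
  set N₀ := 2 * N₁ + M + 1 with hN₀
  set c := x + ε with hc
  set t := q - c with ht
  have htpos : 0 < t := by simp [ht]; linarith
  have hN₁le : N₁ ≤ N₀ := by omega
  -- rewrite sums over range
  have hsum : ∀ z : ℝ, ∑ n : Fin N₀, |z - (x + ξ n)| =
      ∑ n ∈ Finset.range N₀, |z - (x + ξ n)| := fun z =>
    Fin.sum_univ_eq_sum_range (fun i => |z - (x + ξ i)|) N₀
  have key : ∑ n ∈ Finset.range N₀, (|q - (x + ξ n)| - |c - (x + ξ n)|)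
      ≥ -(N₁ : ℝ) * t + (N₀ - N₁ : ℕ) * t := by
    have hsplit : ∑ n ∈ Finset.Ico 0 N₁, (|q - (x + ξ n)| - |c - (x + ξ n)|)
        + ∑ n ∈ Finset.Ico N₁ N₀, (|q - (x + ξ n)| - |c - (x + ξ n)|)
        = ∑ n ∈ Finset.Ico 0 N₀, (|q - (x + ξ n)| - |c - (x + ξ n)|) :=
      Finset.sum_Ico_consecutive _ (Nat.zero_le _) hN₁le
    rw [Finset.range_eq_Ico, ← hsplit]
    have h1 : ∑ n ∈ Finset.Ico 0 N₁, (|q - (x + ξ n)| - |c - (x + ξ n)|)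
        ≥ -(N₁ : ℝ) * t := by
      have : ∀ n ∈ Finset.Ico 0 N₁, -t ≤ |q - (x + ξ n)| - |c - (x + ξ n)| := by
        intro n _
        have h := abs_sub_abs_le_abs_sub (c - (x + ξ n)) (q - (x + ξ n))
        have : |c - (x + ξ n) - (q - (x + ξ n))| = t := by
          rw [show c - (x + ξ n) - (q - (x + ξ n)) = -(q - c) by ring, abs_neg,
            abs_of_pos htpos]
        linarith [abs_sub_abs_le_abs_sub (c - (x + ξ n)) (q - (x + ξ n))]
      calc -(N₁ : ℝ) * t = ∑ _n ∈ Finset.Ico 0 N₁, (-t) := by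
            rw [Finset.sum_const, Nat.card_Ico, Nat.sub_zero, nsmul_eq_mul]; ring
        _ ≤ _ := Finset.sum_le_sum this
    have h2 : ∑ n ∈ Finset.Ico N₁ N₀, (|q - (x + ξ n)| - |c - (x + ξ n)|)
        = ((N₀ - N₁ : ℕ) : ℝ) * t := by
      have : ∀ n ∈ Finset.Ico N₁ N₀, |q - (x + ξ n)| - |c - (x + ξ n)| = t := by
        intro n hn
        have hn1 : N₁ ≤ n := (Finset.mem_Ico.mp hn).1
        have hξn := hξs n hn1
        have h1 : 0 < c - (x + ξ n) := by
          have := abs_lt.mp hξn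
          simp only [hc]; linarith
        have h2 : 0 < q - (x + ξ n) := by linarith
        rw [abs_of_pos h1, abs_of_pos h2]; ring
      rw [Finset.sum_congr rfl this, Finset.sum_const, Nat.card_Ico,
        nsmul_eq_mul]
    rw [h2]
    linarith
  have hquad : q ^ 2 / (2 * L) - c ^ 2 / (2 * L) > -t * M := by
    have hcb : -2 * (|x| + ε) ≤ q + c := by
      have h1 : -(|x| + ε) ≤ c := by
        have := neg_abs_le x; simp only [hc]; linarith
      linarith
    have h3 : q ^ 2 - c ^ 2 = t * (q + c) := by simp only [ht]; ring
    have h4 : t * (q + c) ≥ t * (-2 * (|x| + ε)) :=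
      mul_le_mul_of_nonneg_left hcb htpos.le
    have h5 : q ^ 2 / (2 * L) - c ^ 2 / (2 * L) ≥ -t * (|x| + ε) / L := by
      rw [div_sub_div_same, h3]
      rw [ge_iff_le, div_le_div_iff₀ (by positivity) (by positivity)]
      nlinarith
    have h6 : -t * (|x| + ε) / L > -t * M := by
      have h7 : t * ((|x| + ε) / L) < t * M := (mul_lt_mul_iff_right₀ htpos).mpr hM
      have h8 : -t * (|x| + ε) / L = -(t * ((|x| + ε) / L)) := by ring
      rw [h8]; linarith
    linarith
  have hcard : ((N₀ - N₁ : ℕ) : ℝ) = N₁ + M + 1 := by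
    have : N₀ - N₁ = N₁ + M + 1 := by omega
    rw [this]; push_cast; ring
  unfold qrObjUnit
  rw [hsum q, hsum c]
  rw [hcard] at key
  have hs : ∑ n ∈ Finset.range N₀, |q - (x + ξ n)|
      - ∑ n ∈ Finset.range N₀, |c - (x + ξ n)|
      = ∑ n ∈ Finset.range N₀, (|q - (x + ξ n)| - |c - (x + ξ n)|) :=
    (Finset.sum_sub_distrib _ _).symm
  nlinarith [key, hquad, hs, htpos]

/-- QrMed with unit weights is asymptotically correct: if `ξ n → 0`, then for
every `ε > 0` there exists `N₀` such that the quadratically regularized median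
of the values `x + ξ n`, `n < N₀`, lies within `ε` of `x`. -/
theorem qrMed_asymptotically_correct (L : ℝ) (hL : 0 < L)
    (x : ℝ) (ξ : ℕ → ℝ) (hξ : Tendsto ξ atTop (nhds 0)) :
    ∀ ε > 0, ∃ N₀ : ℕ, ∀ q : ℝ,
      (∀ z : ℝ, qrObjUnit L (fun n : Fin N₀ => x + ξ n) q ≤
        qrObjUnit L (fun n : Fin N₀ => x + ξ n) z) →
      |q - x| ≤ ε := by
  intro ε hε
  obtain ⟨N₁, hN₁⟩ := Metric.tendsto_atTop.mp hξ (ε / 2) (by positivity)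
  simp only [Real.dist_eq, sub_zero] at hN₁
  obtain ⟨M, hM⟩ := exists_nat_gt ((|x| + ε) / L)
  refine ⟨2 * N₁ + M + 1, fun q hq => ?_⟩
  by_contra h
  push_neg at h
  rcases lt_abs.mp h with h1 | h1
  · -- q - x > ε, i.e. x + ε < q
    have hkey := qrKey L hL x ε hε N₁ M hM ξ (fun n hn => (hN₁ n hn).le.lt_of_ne'
      (by intro hcontra; exact absurd hcontra.symm (ne_of_lt (hN₁ n hn)))) q (by linarith)
    exact absurd (hq (x + ε)) (not_le.mpr hkey)
  · -- x - q > ε, i.e. q < x - ε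
    have hM' : (|-x| + ε) / L < M := by rwa [abs_neg]
    have hξs' : ∀ n ≥ N₁, |(-ξ) n| < ε / 2 := by
      intro n hn; simp only [Pi.neg_apply, abs_neg]; exact hN₁ n hn
    have hkey := qrKey L hL (-x) ε hε N₁ M hM' (-ξ) hξs' (-q) (by linarith)
    have heq : (fun n : Fin (2 * N₁ + M + 1) => -x + (-ξ) n)
        = fun n : Fin (2 * N₁ + M + 1) => -((x + ξ n)) := by
      funext n; simp; ring
    rw [heq, show -x + ε = -(x - ε) by ring, qrObjUnit_neg, qrObjUnit_neg] at hkey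
    exact absurd (hq (x - ε)) (not_le.mpr hkey)
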